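/- If ∑xₙ is conditionally convergent, then for the ideal I generated by the even numbers and finite sets applied to the interleaved sequence x_{2n-1} = (-1)ⁿ/n, x_{2n} = 1/2ⁿ, the ideal achievement set A_I(xₙ) = {∑_{n∈A} xₙ : A ∈ I} equals ℝ, while every A ∈ I gives an absolutely convergent subseries ∑_{n∈A} xₙ. -/

import Mathlib

open Filter Finset

/-- The interleaved sequence `x_{2m-1} = (-1)^m/m`, `x_{2m} = 1/2^m` (indices from 1;
index 0 is unused and set to 0). -/
noncomputable def interleavedSeq : ℕ → ℝ := fun n =>
  if n = 0 then 0
  else if n % 2 = 1 then ((-1 : ℝ)) ^ ((n + 1) / 2) / ((n + 1) / 2 : ℕ)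
  else (1 : ℝ) / 2 ^ (n / 2)

lemma floor_double_cases (y : ℝ) : ⌊2*y⌋ = 2*⌊y⌋ ∨ ⌊2*y⌋ = 2*⌊y⌋ + 1 := by
  have h1 : 2*⌊y⌋ ≤ ⌊2*y⌋ := by
    apply Int.le_floor.2; push_cast; linarith [Int.floor_le y]
  have h2 : ⌊2*y⌋ < 2*⌊y⌋ + 2 := by
    apply Int.floor_lt.2; push_cast; linarith [Int.lt_floor_add_one y]
  omega

lemma binary_hasSum {t : ℝ} (h0 : 0 ≤ t) (h1 : t < 1) :
    HasSum (fun m : ℕ => if Odd ⌊t * 2^m⌋ then ((1:ℝ)/2)^m else 0) t := by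
  set g : ℕ → ℝ := fun m => if Odd ⌊t * 2^m⌋ then ((1:ℝ)/2)^m else 0 with hg
  have hgnn : ∀ m, 0 ≤ g m := by
    intro m; simp only [hg]; split
    · positivity
    · exact le_refl 0
  have hgle : ∀ m, g m ≤ ((1:ℝ)/2)^m := by
    intro m; simp only [hg]; split
    · exact le_refl _
    · positivity
  have hsum : Summable g :=
    Summable.of_nonneg_of_le hgnn hgle (summable_geometric_of_lt_one (by norm_num) (by norm_num))
  have hfl0 : ⌊t⌋ = 0 := Int.floor_eq_zero_iff.2 ⟨h0, h1⟩
  have key : ∀ k, ∑ m ∈ range (k+1), g m = (⌊t * 2^k⌋ : ℝ) / 2^k := by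
    intro k
    induction k with
    | zero => simp [hg, hfl0]
    | succ k ih =>
      rw [Finset.sum_range_succ, ih]
      have he : t * 2^(k+1) = 2 * (t * 2^k) := by ring
      simp only [hg, he]
      rcases floor_double_cases (t * 2^k) with h | h
      · rw [h]
        have : ¬ Odd (2 * ⌊t * 2^k⌋) := by rw [Int.odd_iff]; omega
        rw [if_neg this]
        push_cast
        field_simp
        ring
      · rw [h]
        have : Odd (2 * ⌊t * 2^k⌋ + 1) := ⟨⌊t * 2^k⌋, by ring⟩
        rw [if_pos this]
        push_cast
        field_simp
        have h2k : ((1:ℝ)/2)^k * 2^(k*2) = 2^k := by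
          rw [pow_mul, sq, ← mul_assoc, ← mul_pow]; norm_num
        linear_combination h2k
  have hbound : ∀ k : ℕ, t - ((1:ℝ)/2)^k ≤ (⌊t * 2^k⌋ : ℝ) / 2^k ∧ (⌊t * 2^k⌋ : ℝ) / 2^k ≤ t := by
    intro k
    have hp : (0:ℝ) < 2^k := by positivity
    constructor
    · rw [sub_le_iff_le_add, div_add' _ _ _ (ne_of_gt hp), le_div_iff₀ hp]
      have h2 : ((1:ℝ)/2)^k * 2^k = 1 := by
        rw [div_pow, one_pow]; field_simp
      nlinarith [Int.lt_floor_add_one (t * 2^k)]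
    · rw [div_le_iff₀ hp]
      exact Int.floor_le (t * 2^k)
  have hT : Tendsto (fun k : ℕ => (⌊t * 2^k⌋ : ℝ) / 2^k) atTop (nhds t) := by
    have hlow : Tendsto (fun k : ℕ => t - ((1:ℝ)/2)^k) atTop (nhds t) := by
      have := tendsto_pow_atTop_nhds_zero_of_lt_one (r := (1:ℝ)/2) (by norm_num) (by norm_num)
      simpa using (tendsto_const_nhds (x := t)).sub this
    exact tendsto_of_tendsto_of_tendsto_of_le_of_le hlow tendsto_const_nhds
      (fun k => (hbound k).1) (fun k => (hbound k).2)
  have hT2 : Tendsto (fun n : ℕ => ∑ m ∈ range n, g m) atTop (nhds t) := by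
    rw [← Filter.tendsto_add_atTop_iff_nat 1]
    simpa only [key] using hT
  have := tendsto_nhds_unique hsum.hasSum.tendsto_sum_nat hT2
  exact this ▸ hsum.hasSum

lemma exists_partial_le (u : ℕ → ℝ) (h0 : u 0 = 0) (hstep : ∀ k, u (k+1) ≤ u k + 1)
    (htop : Tendsto u atTop atTop) {r : ℝ} (hr : 0 ≤ r) :
    ∃ k, u k ≤ r ∧ r < u k + 1 := by
  classical
  have hne : ∃ N, r < u N := (htop.eventually (eventually_gt_atTop r)).exists
  have hK : r < u (Nat.find hne) := Nat.find_spec hne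
  have hK0 : Nat.find hne ≠ 0 := by
    intro h; rw [h, h0] at hK; linarith
  obtain ⟨k, hk⟩ := Nat.exists_eq_succ_of_ne_zero hK0
  have hmin : ¬ r < u k := Nat.find_min hne (by omega)
  rw [hk] at hK
  exact ⟨k, not_lt.1 hmin, lt_of_lt_of_le hK (hstep k)⟩

lemma exists_partial_ge (u : ℕ → ℝ) (h0 : u 0 = 0) (hstep : ∀ k, u (k+1) ≤ u k + 1)
    (htop : Tendsto u atTop atTop) {t : ℝ} (ht : 0 ≤ t) :
    ∃ k, t ≤ u k ∧ u k < t + 1 := by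
  classical
  have hne : ∃ N, t ≤ u N := (htop.eventually (eventually_ge_atTop t)).exists
  have hK : t ≤ u (Nat.find hne) := Nat.find_spec hne
  rcases Nat.eq_zero_or_pos (Nat.find hne) with h | h
  · have hz : u (Nat.find hne) = 0 := by rw [h, h0]
    exact ⟨Nat.find hne, hK, by rw [hz]; linarith⟩
  · obtain ⟨k, hk⟩ := Nat.exists_eq_succ_of_ne_zero (Nat.pos_iff_ne_zero.1 h)
    have hmin : ¬ t ≤ u k := Nat.find_min hne (by omega)
    rw [hk] at hK
    exact ⟨k+1, hK, lt_of_le_of_lt (hstep k) (by linarith [not_le.1 hmin])⟩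

lemma tendsto_even_harmonic :
    Tendsto (fun k : ℕ => ∑ j ∈ range k, (1:ℝ)/(2*(j:ℝ)+2)) atTop atTop := by
  have h := Real.tendsto_sum_range_one_div_nat_succ_atTop
  have h2 : Tendsto (fun k : ℕ => (1/2:ℝ) * ∑ i ∈ range k, (1 / ((i:ℝ) + 1))) atTop atTop :=
    h.const_mul_atTop (by norm_num)
  convert h2 using 2 with k
  rw [Finset.mul_sum]
  congr 1 with j
  field_simp

lemma tendsto_odd_harmonic :
    Tendsto (fun k : ℕ => ∑ j ∈ range k, (1:ℝ)/(2*(j:ℝ)+1)) atTop atTop := by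
  apply tendsto_atTop_mono _ tendsto_even_harmonic
  intro k
  apply Finset.sum_le_sum
  intro j _
  apply div_le_div_of_nonneg_left (by norm_num) (by positivity) (by linarith)

lemma seq_even (m : ℕ) (hm : m ≠ 0) : interleavedSeq (2*m) = ((1:ℝ)/2)^m := by
  have h1 : 2*m ≠ 0 := by omega
  have h2 : (2*m) % 2 = 0 := by omega
  have h3 : (2*m) / 2 = m := by omega
  simp [interleavedSeq, h1, h2, h3, div_pow]

lemma seq_oddpos (j : ℕ) : interleavedSeq (4*j+3) = 1/(2*(j:ℝ)+2) := by
  have h1 : (4*j+3) % 2 = 1 := by omega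
  have h2 : (4*j+3+1)/2 = 2*(j+1) := by omega
  simp only [interleavedSeq, if_neg (by omega : ¬ 4*j+3 = 0), h1, if_pos rfl, h2]
  rw [pow_mul]
  push_cast
  norm_num
  field_simp

lemma seq_oddneg (j : ℕ) : interleavedSeq (4*j+1) = -(1/(2*(j:ℝ)+1)) := by
  have h1 : (4*j+1) % 2 = 1 := by omega
  have h2 : (4*j+1+1)/2 = 2*j+1 := by omega
  simp only [interleavedSeq, if_neg (by omega : ¬ 4*j+1 = 0), h1, if_pos rfl, h2]
  rw [pow_succ, pow_mul]
  push_cast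
  norm_num
  field_simp

/-- For the interleaved sequence and the ideal `I` generated by the even numbers and the
finite sets, every `A ∈ I` gives an absolutely convergent subseries, yet
`A_I(xₙ) = {∑_{n∈A} xₙ : A ∈ I} = ℝ`. -/
theorem ideal_achievement_eq_real_on_even_ideal :
    (∀ A ∈ {A : Set ℕ | (A \ {n : ℕ | n % 2 = 0}).Finite},
        Summable fun n => |Set.indicator A interleavedSeq n|) ∧
      {r : ℝ | ∃ A ∈ {A : Set ℕ | (A \ {n : ℕ | n % 2 = 0}).Finite},
          HasSum (Set.indicator A interleavedSeq) r} = Set.univ := by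
  classical
  have hinj2 : Function.Injective (fun m : ℕ => 2*m) := fun a b h => by dsimp only at h; omega
  constructor
  · intro A hA
    simp only [Set.mem_setOf_eq] at hA
    set Ev : Set ℕ := {n | n % 2 = 0} with hEv
    have hsplit : (A ∩ Ev) ∪ (A \ Ev) = A := Set.inter_union_diff A Ev
    have hdisj : Disjoint (A ∩ Ev) (A \ Ev) := by
      rw [Set.disjoint_left]; intro n hn1 hn2; exact hn2.2 hn1.2
    have h1 : Summable fun n => |Set.indicator (A ∩ Ev) interleavedSeq n| := by
      rw [← Function.Injective.summable_iff hinj2 ?_]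
      · apply Summable.of_nonneg_of_le (fun m => abs_nonneg _) ?_
          (summable_geometric_of_lt_one (r := (1:ℝ)/2) (by norm_num) (by norm_num))
        intro m
        by_cases hm : 2*m ∈ A ∩ Ev
        · rcases Nat.eq_zero_or_pos m with rfl | hm0
          · simp [Function.comp, Set.indicator, interleavedSeq]
          · simp only [Function.comp, Set.indicator_of_mem hm]
            rw [seq_even m (by omega), abs_of_nonneg (by positivity)]
        · simp only [Function.comp, Set.indicator_of_notMem hm, abs_zero]
          positivity
      · intro n hn
        have : n ∉ A ∩ Ev := by
          rintro ⟨-, h⟩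
          refine hn ⟨n/2, ?_⟩
          simp only [hEv, Set.mem_setOf_eq] at h
          dsimp only
          omega
        simp [Set.indicator_of_notMem this]
    have h2 : Summable fun n => |Set.indicator (A \ Ev) interleavedSeq n| := by
      apply summable_of_ne_finset_zero (s := hA.toFinset)
      intro n hn
      rw [Set.Finite.mem_toFinset] at hn
      simp [Set.indicator_of_notMem hn]
    apply Summable.of_nonneg_of_le (fun n => abs_nonneg _) ?_ (h1.add h2)
    intro n
    calc |Set.indicator A interleavedSeq n|
        = |Set.indicator (A ∩ Ev) interleavedSeq n + Set.indicator (A \ Ev) interleavedSeq n| := by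
          conv_lhs => rw [← hsplit]
          rw [Set.indicator_union_of_disjoint hdisj]
      _ ≤ _ := abs_add_le _ _
  · ext r
    simp only [Set.mem_setOf_eq, Set.mem_univ, iff_true]
    obtain ⟨F, s, hFodd, hFsum, hts0, hts1⟩ :
        ∃ (F : Finset ℕ) (s : ℝ), (∀ n ∈ F, n % 2 = 1) ∧
          (∑ n ∈ F, interleavedSeq n) = s ∧ 0 ≤ r - s ∧ r - s < 1 := by
      rcases le_or_gt 0 r with hr | hr
      · obtain ⟨k, hk1, hk2⟩ := exists_partial_le
          (fun k => ∑ j ∈ range k, (1:ℝ)/(2*(j:ℝ)+2)) (by simp)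
          (by
            intro k
            rw [Finset.sum_range_succ]
            have : (1:ℝ)/(2*(k:ℝ)+2) ≤ 1 := by
              rw [div_le_one (by positivity)]; linarith [Nat.cast_nonneg (α := ℝ) k]
            linarith)
          tendsto_even_harmonic hr
        refine ⟨(range k).image (fun j => 4*j+3), ∑ j ∈ range k, (1:ℝ)/(2*(j:ℝ)+2), ?_, ?_, ?_, ?_⟩
        · intro n hn
          simp only [Finset.mem_image] at hn
          obtain ⟨j, -, rfl⟩ := hn; omega
        · rw [Finset.sum_image (by intro a _ b _ h; dsimp only at h; omega)]
          exact Finset.sum_congr rfl fun j _ => seq_oddpos j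
        · linarith
        · linarith
      · obtain ⟨k, hk1, hk2⟩ := exists_partial_ge
          (fun k => ∑ j ∈ range k, (1:ℝ)/(2*(j:ℝ)+1)) (by simp)
          (by
            intro k
            rw [Finset.sum_range_succ]
            have : (1:ℝ)/(2*(k:ℝ)+1) ≤ 1 := by
              rw [div_le_one (by positivity)]; linarith [Nat.cast_nonneg (α := ℝ) k]
            linarith)
          tendsto_odd_harmonic (by linarith : (0:ℝ) ≤ -r)
        refine ⟨(range k).image (fun j => 4*j+1), -(∑ j ∈ range k, (1:ℝ)/(2*(j:ℝ)+1)), ?_, ?_, ?_, ?_⟩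
        · intro n hn
          simp only [Finset.mem_image] at hn
          obtain ⟨j, -, rfl⟩ := hn; omega
        · rw [Finset.sum_image (by intro a _ b _ h; dsimp only at h; omega)]
          rw [Finset.sum_congr rfl fun j _ => seq_oddneg j, Finset.sum_neg_distrib]
        · linarith
        · linarith
    set t := r - s with hts
    set S : Set ℕ := {m | Odd ⌊t * 2^m⌋} with hS
    have hS0 : 0 ∉ S := by
      have hfl : ⌊t⌋ = 0 := Int.floor_eq_zero_iff.2 ⟨hts0, hts1⟩
      simp [hS, hfl]
    set E : Set ℕ := (fun m : ℕ => 2*m) '' S with hE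
    have hEeven : ∀ n ∈ E, n % 2 = 0 := by rintro n ⟨m, -, rfl⟩; dsimp only; omega
    have hdisj : Disjoint (↑F : Set ℕ) E := by
      rw [Set.disjoint_left]
      intro n hnF hnE
      have h1 := hFodd n hnF
      have h2 := hEeven n hnE
      omega
    refine ⟨↑F ∪ E, ?_, ?_⟩
    · show ((↑F ∪ E : Set ℕ) \ {n : ℕ | n % 2 = 0}).Finite
      apply Set.Finite.subset F.finite_toSet
      intro n hn
      simp only [Set.mem_diff, Set.mem_union, Set.mem_setOf_eq] at hn
      rcases hn.1 with h | h
      · exact h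
      · exact (hn.2 (hEeven n h)).elim
    · rw [Set.indicator_union_of_disjoint hdisj]
      have h1 : HasSum (Set.indicator (↑F : Set ℕ) interleavedSeq) s := by
        have h := hasSum_sum_of_ne_finset_zero
          (f := Set.indicator (↑F : Set ℕ) interleavedSeq) (s := F) (L := SummationFilter.unconditional ℕ)
          (fun b hb => Set.indicator_of_notMem (by simpa using hb) _)
        rwa [Finset.sum_congr rfl (fun n hn => Set.indicator_of_mem (by simpa using hn) _),
          hFsum] at h
      have h2 : HasSum (Set.indicator E interleavedSeq) t := by
        rw [← Function.Injective.hasSum_iff hinj2 ?_]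
        · have heq : (Set.indicator E interleavedSeq ∘ fun m : ℕ => 2*m) =
              fun m : ℕ => if Odd ⌊t * 2^m⌋ then ((1:ℝ)/2)^m else 0 := by
            funext m
            by_cases hm : m ∈ S
            · have hm0 : m ≠ 0 := fun h => hS0 (h ▸ hm)
              have hmE : (2*m) ∈ E := ⟨m, hm, rfl⟩
              simp only [Function.comp, Set.indicator_of_mem hmE, seq_even m hm0]
              rw [if_pos (by exact hm)]
            · have hmE : (2*m) ∉ E := by
                rintro ⟨m', hm', he⟩
                have : m' = m := hinj2 he
                exact hm (this ▸ hm')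
              simp only [Function.comp, Set.indicator_of_notMem hmE]
              rw [if_neg (by exact hm)]
          rw [heq]
          exact binary_hasSum hts0 hts1
        · intro n hn
          apply Set.indicator_of_notMem
          rintro ⟨m, -, rfl⟩
          exact hn ⟨m, rfl⟩
      have hst : s + t = r := by rw [hts]; ring
      exact hst ▸ h1.add h2
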